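/- Let α := ∫_{[0,1]^d} r(x)·Φ(x) dx and define the estimator α̂ := (1/n)·Σ_{i=1}^n Y_i²·Φ(X_i) − E[V²]·∫_{[0,1]^d} Φ(x) dx. Then E[(α̂ − α)²] ≤ 8·(E[U⁴]·‖f‖_∞⁴ + E[V⁴])·(∫_{[0,1]^d} Φ(x)² dx)/n. (This is the first inequality of Lemma 2 of the paper under assumption set H1, stated for a general bounded coefficient function Φ.) -/

import Mathlib

open MeasureTheory ProbabilityTheory

private lemma quad_bound_aux (a b : ℝ) : (a + b) ^ 4 ≤ 8 * (a ^ 4 + b ^ 4) := by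
  nlinarith [sq_nonneg (a - b), sq_nonneg (a + b), sq_nonneg (a ^ 2 - b ^ 2),
    sq_nonneg (a ^ 2 + b ^ 2), sq_nonneg (a * b), sq_nonneg a, sq_nonneg b]

private lemma abs_mul_le_quartic (u v : ℝ) : |u * v| ≤ u ^ 4 + v ^ 4 + 1 := by
  have h1 : |u * v| ≤ (u ^ 2 + v ^ 2) / 2 := by
    rw [abs_mul]
    nlinarith [sq_nonneg (|u| - |v|), sq_abs u, sq_abs v, abs_nonneg u, abs_nonneg v]
  nlinarith [sq_nonneg (u ^ 2 - 1), sq_nonneg (v ^ 2 - 1), sq_nonneg u, sq_nonneg v]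

private lemma abs_le_quartic (v : ℝ) : |v| ≤ v ^ 4 + 1 := by
  nlinarith [sq_nonneg (|v| - 1), sq_abs v, sq_nonneg (v ^ 2 - 1), abs_nonneg v]

private lemma abs_le_sq_add_one (v : ℝ) : |v| ≤ v ^ 2 + 1 := by
  nlinarith [sq_nonneg (|v| - 1), sq_abs v, abs_nonneg v]

private lemma sq_le_quartic (v : ℝ) : |v ^ 2| ≤ v ^ 4 + 1 := by
  rw [abs_of_nonneg (sq_nonneg v)]
  nlinarith [sq_nonneg (v ^ 2 - 1)]

/-- first inequality of Lemma 2 of the paper, assumption set H1.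
With `α = ∫ r Φ` and `α̂ = (1/n) Σᵢ Yᵢ² Φ(Xᵢ) − E[V²] ∫ Φ`, one has
`E[(α̂ − α)²] ≤ 8 (E[U⁴] ‖f‖_∞⁴ + E[V⁴]) (∫ Φ²) / n`. -/
theorem linear_coefficient_MSE_H1
    {Ω : Type*} [MeasurableSpace Ω] (P : Measure Ω) [IsProbabilityMeasure P]
    (d : ℕ) (hd : 1 ≤ d)
    (X : Ω → (Fin d → ℝ)) (U V : Ω → ℝ)
    (hXm : Measurable X) (hUm : Measurable U) (hVm : Measurable V)
    -- X is uniformly distributed on the cube [0,1]^d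
    (hXlaw : Measure.map X P = volume.restrict (Set.Icc (0 : Fin d → ℝ) 1))
    -- E[U⁴] < ∞ and E[V⁴] < ∞
    (hU4 : Integrable (fun ω => (U ω) ^ 4) P)
    (hV4 : Integrable (fun ω => (V ω) ^ 4) P)
    -- X, U, V mutually independent
    (hXU : IndepFun X U P)
    (hXUV : IndepFun (fun ω => (X ω, U ω)) V P)
    -- f bounded measurable on the cube, Y = f(X)·U + V, r = f²
    (f : (Fin d → ℝ) → ℝ) (hfm : Measurable f)
    (Cf : ℝ) (hf : ∀ x ∈ Set.Icc (0 : Fin d → ℝ) 1, |f x| ≤ Cf)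
    (r : (Fin d → ℝ) → ℝ) (hr : ∀ x, r x = (f x) ^ 2)
    -- E[U²] = 1 and (E[U] = 0 or E[V] = 0)
    (hU2int : Integrable (fun ω => (U ω) ^ 2) P)
    (hU2 : ∫ ω, (U ω) ^ 2 ∂P = 1)
    (hcent : (∫ ω, U ω ∂P = 0) ∨ (∫ ω, V ω ∂P = 0))
    -- the i.i.d. copies (Xᵢ, Uᵢ, Vᵢ), i = 1,…,n, of (X, U, V)
    (n : ℕ) (hn : 1 ≤ n)
    (Xs : Fin n → Ω → (Fin d → ℝ)) (Us Vs : Fin n → Ω → ℝ)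
    (hXsm : ∀ i, Measurable (Xs i)) (hUsm : ∀ i, Measurable (Us i))
    (hVsm : ∀ i, Measurable (Vs i))
    (hiid : iIndepFun
      (fun i ω => (Xs i ω, Us i ω, Vs i ω)) P)
    (hident : ∀ i, IdentDistrib (fun ω => (Xs i ω, Us i ω, Vs i ω))
      (fun ω => (X ω, U ω, V ω)) P P)
    -- Φ bounded measurable on the cube
    (Φ : (Fin d → ℝ) → ℝ) (hΦm : Measurable Φ)
    (CΦ : ℝ) (hΦ : ∀ x ∈ Set.Icc (0 : Fin d → ℝ) 1, |Φ x| ≤ CΦ) :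
    ∫ ω, ((1 / (n : ℝ)) * (∑ i, (f (Xs i ω) * Us i ω + Vs i ω) ^ 2 * Φ (Xs i ω))
            - (∫ ω', (V ω') ^ 2 ∂P) * (∫ x in Set.Icc (0 : Fin d → ℝ) 1, Φ x)
            - ∫ x in Set.Icc (0 : Fin d → ℝ) 1, r x * Φ x) ^ 2 ∂P
      ≤ 8 * ((∫ ω, (U ω) ^ 4 ∂P) * (⨆ x : (Set.Icc (0 : Fin d → ℝ) 1), |f x.1|) ^ 4
              + ∫ ω, (V ω) ^ 4 ∂P)
          * (∫ x in Set.Icc (0 : Fin d → ℝ) 1, (Φ x) ^ 2) / n := by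
  classical
  have h01 : (0 : Fin d → ℝ) ≤ 1 := fun i => zero_le_one
  have h0mem : (0 : Fin d → ℝ) ∈ Set.Icc (0 : Fin d → ℝ) 1 := Set.mem_Icc.2 ⟨le_refl _, h01⟩
  have hCΦ0 : 0 ≤ CΦ := le_trans (abs_nonneg _) (hΦ 0 h0mem)
  haveI : Nonempty (Set.Icc (0 : Fin d → ℝ) 1) := ⟨⟨0, h0mem⟩⟩
  set M : ℝ := ⨆ x : (Set.Icc (0 : Fin d → ℝ) 1), |f x.1| with hMdef
  have hbdd : BddAbove (Set.range fun x : (Set.Icc (0 : Fin d → ℝ) 1) => |f x.1|) :=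
    ⟨Cf, by rintro y ⟨x, rfl⟩; exact hf x.1 x.2⟩
  have hMf : ∀ x ∈ Set.Icc (0 : Fin d → ℝ) 1, |f x| ≤ M := fun x hx =>
    le_ciSup hbdd (⟨x, hx⟩ : (Set.Icc (0 : Fin d → ℝ) 1))
  have hM0 : 0 ≤ M := le_trans (abs_nonneg _) (hMf 0 h0mem)
  -- the cube has volume one
  haveI hprob : IsProbabilityMeasure (volume.restrict (Set.Icc (0 : Fin d → ℝ) 1)) := by
    constructor
    rw [Measure.restrict_apply_univ]
    simp [Real.volume_Icc_pi]
  -- a.e. membership of X in the cube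
  have aeX : ∀ᵐ ω ∂P, X ω ∈ Set.Icc (0 : Fin d → ℝ) 1 := by
    have h0 : P (X ⁻¹' (Set.Icc (0 : Fin d → ℝ) 1)ᶜ) = 0 := by
      rw [← Measure.map_apply hXm measurableSet_Icc.compl, hXlaw,
        Measure.restrict_apply measurableSet_Icc.compl]
      simp
    exact ae_iff.2 h0
  -- the scalar function of the triple
  set g : (Fin d → ℝ) × ℝ × ℝ → ℝ := fun p => (f p.1 * p.2.1 + p.2.2) ^ 2 * Φ p.1 with hgdef
  have hgm : Measurable g :=
    ((((hfm.comp measurable_fst).mul (measurable_fst.comp measurable_snd)).add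
      (measurable_snd.comp measurable_snd)).pow_const 2).mul (hΦm.comp measurable_fst)
  set W : Fin n → Ω → ℝ := fun i ω => (f (Xs i ω) * Us i ω + Vs i ω) ^ 2 * Φ (Xs i ω) with hWdef
  set W0 : Ω → ℝ := fun ω => (f (X ω) * U ω + V ω) ^ 2 * Φ (X ω) with hW0def
  have hW0m : Measurable W0 := hgm.comp (hXm.prodMk (hUm.prodMk hVm))
  have hWm : ∀ i, Measurable (W i) := fun i =>
    hgm.comp ((hXsm i).prodMk ((hUsm i).prodMk (hVsm i)))
  have hidW : ∀ i, IdentDistrib (W i) W0 P P := fun i => (hident i).comp hgm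
  -- integrability helper
  have hIg : ∀ (φ : (Fin d → ℝ) → ℝ), Measurable φ → ∀ C : ℝ,
      (∀ x ∈ Set.Icc (0 : Fin d → ℝ) 1, |φ x| ≤ C) →
      ∀ h : Ω → ℝ, Measurable h → Integrable h P →
      Integrable (fun ω => φ (X ω) * h ω) P := by
    intro φ hφ C hC h hhm hh
    refine Integrable.mono' (hh.abs.const_mul C)
      (((hφ.comp hXm).mul hhm).aestronglyMeasurable) ?_
    filter_upwards [aeX] with ω hω
    rw [Real.norm_eq_abs, abs_mul]
    exact mul_le_mul_of_nonneg_right (hC _ hω) (abs_nonneg _)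
  -- basic moments
  have hV2 : Integrable (fun ω => V ω ^ 2) P := by
    refine (hV4.add (integrable_const 1)).mono'
      ((hVm.pow_const 2).aestronglyMeasurable) (ae_of_all _ fun ω => ?_)
    rw [Real.norm_eq_abs]
    exact sq_le_quartic (V ω)
  have hV1 : Integrable V P := by
    refine (hV4.add (integrable_const 1)).mono' hVm.aestronglyMeasurable
      (ae_of_all _ fun ω => ?_)
    rw [Real.norm_eq_abs]
    exact abs_le_quartic (V ω)
  have hU1 : Integrable U P := by
    refine (hU2int.add (integrable_const 1)).mono' hUm.aestronglyMeasurable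
      (ae_of_all _ fun ω => ?_)
    rw [Real.norm_eq_abs]
    exact abs_le_sq_add_one (U ω)
  have hUV : Integrable (fun ω => U ω * V ω) P := by
    refine ((hU4.add hV4).add (integrable_const 1)).mono'
      ((hUm.mul hVm).aestronglyMeasurable) (ae_of_all _ fun ω => ?_)
    rw [Real.norm_eq_abs]
    simpa [add_assoc] using abs_mul_le_quartic (U ω) (V ω)
  -- transfer of integrals over the cube
  have keyX : ∀ φ : (Fin d → ℝ) → ℝ, Measurable φ →
      ∫ ω, φ (X ω) ∂P = ∫ x in Set.Icc (0 : Fin d → ℝ) 1, φ x := by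
    intro φ hφ
    rw [← hXlaw, integral_map hXm.aemeasurable hφ.aestronglyMeasurable]
  -- independence of X and V
  have hXV : IndepFun X V P := hXUV.comp measurable_fst measurable_id
  -- various product formulas
  have E1 : ∫ ω, (f (X ω) ^ 2 * Φ (X ω)) * U ω ^ 2 ∂P
      = (∫ x in Set.Icc (0 : Fin d → ℝ) 1, f x ^ 2 * Φ x) * ∫ ω, U ω ^ 2 ∂P := by
    have h := (hXU.comp ((hfm.pow_const 2).mul hΦm) (measurable_id.pow_const 2)).integral_fun_mul_eq_mul_integral
      ((((hfm.pow_const 2).mul hΦm).comp hXm).aestronglyMeasurable)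
      ((hUm.pow_const 2).aestronglyMeasurable)
    rw [← keyX (fun x => f x ^ 2 * Φ x) ((hfm.pow_const 2).mul hΦm)]
    exact h
  have E3 : ∫ ω, Φ (X ω) * V ω ^ 2 ∂P
      = (∫ x in Set.Icc (0 : Fin d → ℝ) 1, Φ x) * ∫ ω, V ω ^ 2 ∂P := by
    have h := (hXV.comp hΦm (measurable_id.pow_const 2)).integral_fun_mul_eq_mul_integral
      ((hΦm.comp hXm).aestronglyMeasurable) ((hVm.pow_const 2).aestronglyMeasurable)
    rw [← keyX _ hΦm]
    exact h
  have E2 : ∫ ω, (f (X ω) * Φ (X ω)) * (U ω * V ω) ∂P = 0 := by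
    have hassoc : (fun ω => (f (X ω) * Φ (X ω)) * (U ω * V ω))
        = fun ω => ((f (X ω) * Φ (X ω)) * U ω) * V ω := by
      funext ω; ring
    have hind2 : IndepFun (fun ω => (f (X ω) * Φ (X ω)) * U ω) V P :=
      hXUV.comp (((hfm.comp measurable_fst).mul (hΦm.comp measurable_fst)).mul measurable_snd)
        measurable_id
    have h2a : ∫ ω, ((f (X ω) * Φ (X ω)) * U ω) * V ω ∂P
        = (∫ ω, (f (X ω) * Φ (X ω)) * U ω ∂P) * ∫ ω, V ω ∂P :=
      hind2.integral_fun_mul_eq_mul_integral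
        ((((hfm.comp hXm).mul (hΦm.comp hXm)).mul hUm).aestronglyMeasurable)
        hVm.aestronglyMeasurable
    have h2b : ∫ ω, (f (X ω) * Φ (X ω)) * U ω ∂P
        = (∫ ω, f (X ω) * Φ (X ω) ∂P) * ∫ ω, U ω ∂P :=
      (hXU.comp (hfm.mul hΦm) measurable_id).integral_fun_mul_eq_mul_integral
        (((hfm.mul hΦm).comp hXm).aestronglyMeasurable) hUm.aestronglyMeasurable
    rw [hassoc, h2a, h2b]
    rcases hcent with h | h <;> rw [h] <;> ring
  have E4 : ∫ ω, (f (X ω) ^ 4 * Φ (X ω) ^ 2) * U ω ^ 4 ∂P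
      = (∫ x in Set.Icc (0 : Fin d → ℝ) 1, f x ^ 4 * Φ x ^ 2) * ∫ ω, U ω ^ 4 ∂P := by
    have h := (hXU.comp ((hfm.pow_const 4).mul (hΦm.pow_const 2))
      (measurable_id.pow_const 4)).integral_fun_mul_eq_mul_integral
      ((((hfm.pow_const 4).mul (hΦm.pow_const 2)).comp hXm).aestronglyMeasurable)
      ((hUm.pow_const 4).aestronglyMeasurable)
    rw [← keyX (fun x => f x ^ 4 * Φ x ^ 2) ((hfm.pow_const 4).mul (hΦm.pow_const 2))]
    exact h
  have E5 : ∫ ω, Φ (X ω) ^ 2 * V ω ^ 4 ∂P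
      = (∫ x in Set.Icc (0 : Fin d → ℝ) 1, Φ x ^ 2) * ∫ ω, V ω ^ 4 ∂P := by
    have h := (hXV.comp (hΦm.pow_const 2) (measurable_id.pow_const 4)).integral_fun_mul_eq_mul_integral
      (((hΦm.pow_const 2).comp hXm).aestronglyMeasurable)
      ((hVm.pow_const 4).aestronglyMeasurable)
    rw [← keyX _ (hΦm.pow_const 2)]
    exact h
  -- integrability of the pieces of W0
  have hi1 : Integrable (fun ω => (f (X ω) ^ 2 * Φ (X ω)) * U ω ^ 2) P := by
    refine hIg _ ((hfm.pow_const 2).mul hΦm) (M ^ 2 * CΦ) (fun x hx => ?_) _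
      (hUm.pow_const 2) hU2int
    rw [Pi.mul_apply, abs_mul, abs_pow]
    exact mul_le_mul (pow_le_pow_left₀ (abs_nonneg _) (hMf x hx) 2) (hΦ x hx)
      (abs_nonneg _) (by positivity)
  have hi2 : Integrable (fun ω => (f (X ω) * Φ (X ω)) * (U ω * V ω)) P := by
    refine hIg _ (hfm.mul hΦm) (M * CΦ) (fun x hx => ?_) _ (hUm.mul hVm) hUV
    rw [Pi.mul_apply, abs_mul]
    exact mul_le_mul (hMf x hx) (hΦ x hx) (abs_nonneg _) hM0
  have hi3 : Integrable (fun ω => Φ (X ω) * V ω ^ 2) P :=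
    hIg Φ hΦm CΦ hΦ _ (hVm.pow_const 2) hV2
  have hi4 : Integrable (fun ω => (f (X ω) ^ 4 * Φ (X ω) ^ 2) * U ω ^ 4) P := by
    refine hIg _ ((hfm.pow_const 4).mul (hΦm.pow_const 2)) (M ^ 4 * CΦ ^ 2)
      (fun x hx => ?_) _ (hUm.pow_const 4) hU4
    rw [Pi.mul_apply, abs_mul, abs_pow, abs_pow]
    exact mul_le_mul (pow_le_pow_left₀ (abs_nonneg _) (hMf x hx) 4)
      (pow_le_pow_left₀ (abs_nonneg _) (hΦ x hx) 2) (by positivity) (by positivity)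
  have hi5 : Integrable (fun ω => Φ (X ω) ^ 2 * V ω ^ 4) P := by
    refine hIg _ (hΦm.pow_const 2) (CΦ ^ 2) (fun x hx => ?_) _ (hVm.pow_const 4) hV4
    rw [abs_pow]
    exact pow_le_pow_left₀ (abs_nonneg _) (hΦ x hx) 2
  -- expectation of W0
  have hEW0 : ∫ ω, W0 ω ∂P
      = (∫ x in Set.Icc (0 : Fin d → ℝ) 1, f x ^ 2 * Φ x)
        + (∫ ω', (V ω') ^ 2 ∂P) * (∫ x in Set.Icc (0 : Fin d → ℝ) 1, Φ x) := by
    have hi23 : Integrable (fun ω => (2 : ℝ) * ((f (X ω) * Φ (X ω)) * (U ω * V ω))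
        + Φ (X ω) * V ω ^ 2) P := (hi2.const_mul 2).add hi3
    have hexp : ∫ ω, W0 ω ∂P = ∫ ω, ((f (X ω) ^ 2 * Φ (X ω)) * U ω ^ 2
        + ((2 : ℝ) * ((f (X ω) * Φ (X ω)) * (U ω * V ω)) + Φ (X ω) * V ω ^ 2)) ∂P := by
      refine integral_congr_ae (ae_of_all _ fun ω => ?_)
      simp only [hW0def]; ring
    rw [hexp, integral_add hi1 hi23,
      integral_add (hi2.const_mul 2) hi3, integral_const_mul, E1, E2, E3, hU2]
    ring
  -- square-integrability of W0
  have hBptw : ∀ ω, W0 ω ^ 2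
      ≤ 8 * ((f (X ω) ^ 4 * Φ (X ω) ^ 2) * U ω ^ 4 + Φ (X ω) ^ 2 * V ω ^ 4) := by
    intro ω
    have h8 : (f (X ω) * U ω + V ω) ^ 4 ≤ 8 * ((f (X ω) * U ω) ^ 4 + V ω ^ 4) :=
      quad_bound_aux _ _
    have hsq : W0 ω ^ 2 = (f (X ω) * U ω + V ω) ^ 4 * Φ (X ω) ^ 2 := by
      rw [hW0def]; ring
    rw [hsq]
    calc (f (X ω) * U ω + V ω) ^ 4 * Φ (X ω) ^ 2
        ≤ (8 * ((f (X ω) * U ω) ^ 4 + V ω ^ 4)) * Φ (X ω) ^ 2 :=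
          mul_le_mul_of_nonneg_right h8 (sq_nonneg _)
      _ = 8 * ((f (X ω) ^ 4 * Φ (X ω) ^ 2) * U ω ^ 4 + Φ (X ω) ^ 2 * V ω ^ 4) := by ring
  have hiB : Integrable
      (fun ω => 8 * ((f (X ω) ^ 4 * Φ (X ω) ^ 2) * U ω ^ 4 + Φ (X ω) ^ 2 * V ω ^ 4)) P :=
    (hi4.add hi5).const_mul 8
  have hW0sq : Integrable (fun ω => W0 ω ^ 2) P := by
    refine hiB.mono' ((hW0m.pow_const 2).aestronglyMeasurable) (ae_of_all _ fun ω => ?_)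
    rw [Real.norm_eq_abs, abs_of_nonneg (sq_nonneg _)]
    exact hBptw ω
  have hMem : MemLp W0 2 P :=
    (memLp_two_iff_integrable_sq hW0m.aestronglyMeasurable).2 hW0sq
  have hMemi : ∀ i, MemLp (W i) 2 P := fun i => (hidW i).symm.memLp_snd hMem
  have hWint : ∀ i, Integrable (W i) P := fun i => (hMemi i).integrable one_le_two
  -- nonnegativity facts
  have hEU4 : 0 ≤ ∫ ω, U ω ^ 4 ∂P := integral_nonneg fun ω => by positivity
  have hEV4 : 0 ≤ ∫ ω, V ω ^ 4 ∂P := integral_nonneg fun ω => by positivity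
  have hIΦ2 : 0 ≤ ∫ x in Set.Icc (0 : Fin d → ℝ) 1, Φ x ^ 2 :=
    integral_nonneg fun x => sq_nonneg _
  -- bound on ∫ f⁴Φ² over the cube
  have hintΦ2 : IntegrableOn (fun x => Φ x ^ 2) (Set.Icc (0 : Fin d → ℝ) 1) volume := by
    refine (integrable_const (CΦ ^ 2)).mono'
      ((hΦm.pow_const 2).aestronglyMeasurable) ?_
    filter_upwards [ae_restrict_mem measurableSet_Icc] with x hx
    rw [Real.norm_eq_abs, abs_pow]
    exact pow_le_pow_left₀ (abs_nonneg _) (hΦ x hx) 2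
  have hintf4 : IntegrableOn (fun x => f x ^ 4 * Φ x ^ 2)
      (Set.Icc (0 : Fin d → ℝ) 1) volume := by
    refine (integrable_const (M ^ 4 * CΦ ^ 2)).mono'
      (((hfm.pow_const 4).mul (hΦm.pow_const 2)).aestronglyMeasurable) ?_
    filter_upwards [ae_restrict_mem measurableSet_Icc] with x hx
    rw [Real.norm_eq_abs, abs_mul, abs_pow, abs_pow]
    exact mul_le_mul (pow_le_pow_left₀ (abs_nonneg _) (hMf x hx) 4)
      (pow_le_pow_left₀ (abs_nonneg _) (hΦ x hx) 2) (by positivity) (by positivity)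
  have hf4le : ∫ x in Set.Icc (0 : Fin d → ℝ) 1, f x ^ 4 * Φ x ^ 2
      ≤ M ^ 4 * ∫ x in Set.Icc (0 : Fin d → ℝ) 1, Φ x ^ 2 := by
    rw [← integral_const_mul]
    refine setIntegral_mono_on hintf4 (hintΦ2.const_mul _) measurableSet_Icc fun x hx => ?_
    have hfx : f x ^ 4 ≤ M ^ 4 := by
      calc f x ^ 4 ≤ |f x ^ 4| := le_abs_self _
        _ = |f x| ^ 4 := abs_pow _ _
        _ ≤ M ^ 4 := pow_le_pow_left₀ (abs_nonneg _) (hMf x hx) 4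
    exact mul_le_mul_of_nonneg_right hfx (sq_nonneg _)
  -- variance bound for W0
  have hvarW0 : variance W0 P
      ≤ 8 * ((∫ ω, U ω ^ 4 ∂P) * M ^ 4 + ∫ ω, V ω ^ 4 ∂P)
          * ∫ x in Set.Icc (0 : Fin d → ℝ) 1, Φ x ^ 2 := by
    have h1 : variance W0 P ≤ ∫ ω, W0 ω ^ 2 ∂P := by
      have := variance_le_expectation_sq (μ := P) hW0m.aestronglyMeasurable
      simpa [Pi.pow_apply] using this
    have h2 : ∫ ω, W0 ω ^ 2 ∂P
        ≤ ∫ ω, 8 * ((f (X ω) ^ 4 * Φ (X ω) ^ 2) * U ω ^ 4 + Φ (X ω) ^ 2 * V ω ^ 4) ∂P :=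
      integral_mono hW0sq hiB hBptw
    have h3 : ∫ ω, 8 * ((f (X ω) ^ 4 * Φ (X ω) ^ 2) * U ω ^ 4 + Φ (X ω) ^ 2 * V ω ^ 4) ∂P
        = 8 * ((∫ x in Set.Icc (0 : Fin d → ℝ) 1, f x ^ 4 * Φ x ^ 2) * (∫ ω, U ω ^ 4 ∂P)
            + (∫ x in Set.Icc (0 : Fin d → ℝ) 1, Φ x ^ 2) * ∫ ω, V ω ^ 4 ∂P) := by
      rw [integral_const_mul, integral_add hi4 hi5, E4, E5]
    have h4 : (∫ x in Set.Icc (0 : Fin d → ℝ) 1, f x ^ 4 * Φ x ^ 2) * (∫ ω, U ω ^ 4 ∂P)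
        ≤ (M ^ 4 * ∫ x in Set.Icc (0 : Fin d → ℝ) 1, Φ x ^ 2) * (∫ ω, U ω ^ 4 ∂P) :=
      mul_le_mul_of_nonneg_right hf4le hEU4
    calc variance W0 P ≤ ∫ ω, W0 ω ^ 2 ∂P := h1
      _ ≤ 8 * ((∫ x in Set.Icc (0 : Fin d → ℝ) 1, f x ^ 4 * Φ x ^ 2) * (∫ ω, U ω ^ 4 ∂P)
            + (∫ x in Set.Icc (0 : Fin d → ℝ) 1, Φ x ^ 2) * ∫ ω, V ω ^ 4 ∂P) := by
          rw [← h3]; exact h2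
      _ ≤ 8 * ((M ^ 4 * ∫ x in Set.Icc (0 : Fin d → ℝ) 1, Φ x ^ 2) * (∫ ω, U ω ^ 4 ∂P)
            + (∫ x in Set.Icc (0 : Fin d → ℝ) 1, Φ x ^ 2) * ∫ ω, V ω ^ 4 ∂P) := by
          linarith [h4]
      _ = 8 * ((∫ ω, U ω ^ 4 ∂P) * M ^ 4 + ∫ ω, V ω ^ 4 ∂P)
            * ∫ x in Set.Icc (0 : Fin d → ℝ) 1, Φ x ^ 2 := by ring
  -- the estimator
  have hn0 : (n : ℝ) ≠ 0 := by positivity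
  have hnpos : (0 : ℝ) < n := by positivity
  have hmemSf : MemLp (fun ω => ∑ i, W i ω) 2 P := memLp_finset_sum _ fun i _ => hMemi i
  have hmemT : MemLp (fun ω => (1 / (n : ℝ)) * ∑ i, W i ω) 2 P := hmemSf.const_mul _
  -- mean of T
  have hET : ∫ ω, (1 / (n : ℝ)) * ∑ i, W i ω ∂P = ∫ ω, W0 ω ∂P := by
    rw [integral_const_mul, integral_finset_sum _ fun i _ => hWint i,
      Finset.sum_congr rfl fun i (_ : i ∈ Finset.univ) => (hidW i).integral_eq,
      Finset.sum_const, Finset.card_univ, Fintype.card_fin, nsmul_eq_mul]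
    field_simp
  -- variance of T
  have hTsmul : (fun ω => (1 / (n : ℝ)) * ∑ i, W i ω) = (1 / (n : ℝ)) • (∑ i, W i) := by
    funext ω; simp [Finset.sum_apply]
  have hvarT : variance (fun ω => (1 / (n : ℝ)) * ∑ i, W i ω) P = variance W0 P / n := by
    rw [hTsmul, variance_smul]
    have hsum : variance (∑ i, W i) P = ∑ i : Fin n, variance (W i) P :=
      IndepFun.variance_sum (fun i _ => hMemi i)
        (fun i _ j _ hij => (hiid.indepFun hij).comp hgm hgm)
    rw [hsum, Finset.sum_congr rfl fun i (_ : i ∈ Finset.univ) => (hidW i).variance_eq,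
      Finset.sum_const, Finset.card_univ, Fintype.card_fin, nsmul_eq_mul]
    field_simp
  -- identify the LHS with the variance of T
  have hrΦ : ∫ x in Set.Icc (0 : Fin d → ℝ) 1, r x * Φ x
      = ∫ x in Set.Icc (0 : Fin d → ℝ) 1, f x ^ 2 * Φ x := by
    simp only [hr]
  have hc : (∫ ω', (V ω') ^ 2 ∂P) * (∫ x in Set.Icc (0 : Fin d → ℝ) 1, Φ x)
      + ∫ x in Set.Icc (0 : Fin d → ℝ) 1, r x * Φ x
      = ∫ ω, (1 / (n : ℝ)) * ∑ i, W i ω ∂P := by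
    rw [hET, hEW0, hrΦ]; ring
  have hLHS : ∫ ω, ((1 / (n : ℝ)) * (∑ i, W i ω)
      - (∫ ω', (V ω') ^ 2 ∂P) * (∫ x in Set.Icc (0 : Fin d → ℝ) 1, Φ x)
      - ∫ x in Set.Icc (0 : Fin d → ℝ) 1, r x * Φ x) ^ 2 ∂P
      = variance (fun ω => (1 / (n : ℝ)) * ∑ i, W i ω) P := by
    rw [variance_eq_integral hmemT.aestronglyMeasurable.aemeasurable]
    refine integral_congr_ae (ae_of_all _ fun ω => ?_)
    simp only [Pi.pow_apply, Pi.sub_apply]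
    rw [← hc]
    ring
  have key : ∫ ω, ((1 / (n : ℝ)) * (∑ i, W i ω)
      - (∫ ω', (V ω') ^ 2 ∂P) * (∫ x in Set.Icc (0 : Fin d → ℝ) 1, Φ x)
      - ∫ x in Set.Icc (0 : Fin d → ℝ) 1, r x * Φ x) ^ 2 ∂P
      ≤ 8 * ((∫ ω, (U ω) ^ 4 ∂P) * M ^ 4 + ∫ ω, (V ω) ^ 4 ∂P)
          * (∫ x in Set.Icc (0 : Fin d → ℝ) 1, (Φ x) ^ 2) / n := by
    rw [hLHS, hvarT]
    gcongr
  simpa only [hWdef] using key
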